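/- The iterated residue Res_{x_1=0} Res_{x_2=0} of e^{a_1 x_1 + a_2 x_2} / (x_1 x_2 (x_1 − x_2)^n) equals a_1^n / n!, for any positive integer n and real numbers a_1, a_2. -/
import Mathlib


open Complex

/-- The residue at `0` of a function `f : ℂ → ℂ`, computed as a contour integral over the
circle of radius `r` centered at `0`. -/
noncomputable def res (f : ℂ → ℂ) (r : ℝ) : ℂ :=
    (2 * Real.pi * Complex.I)⁻¹ * ∮ z in C(0, r), f z

lemma res_congr {f g : ℂ → ℂ} {r : ℝ} (hr : 0 ≤ r)
    (h : Set.EqOn f g (Metric.sphere (0:ℂ) r)) : res f r = res g r := by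
  unfold res
  rw [circleIntegral.integral_congr hr h]

lemma inner_res (n : ℕ) (a1 a2 : ℝ) (x1 : ℂ) (hx1 : ‖x1‖ = 2) :
    res (fun x2 => Complex.exp (a1 * x1 + a2 * x2) / (x1 * x2 * (x1 - x2) ^ n)) 1
      = Complex.exp (a1 * x1) / x1 ^ (n + 1) := by
  have hsub : ∀ x2 : ℂ, x2 ∈ Metric.closedBall (0:ℂ) 1 → x1 - x2 ≠ 0 := by
    intro x2 hx2
    rw [Metric.mem_closedBall, dist_zero_right] at hx2
    intro h
    have : x1 = x2 := by linear_combination h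
    rw [this] at hx1; linarith [hx1 ▸ hx2]
  set h : ℂ → ℂ := fun x2 => Complex.exp (a1 * x1 + a2 * x2) / (x1 * (x1 - x2) ^ n) with hh
  have hd : DifferentiableOn ℂ h (Metric.closedBall (0:ℂ) 1) := by
    apply DifferentiableOn.div
    · exact (Complex.differentiable_exp.comp (by fun_prop)).differentiableOn
    · fun_prop
    · intro x2 hx2
      exact mul_ne_zero (by intro h0; rw [h0] at hx1; simp at hx1)
        (pow_ne_zero _ (hsub x2 hx2))
  have key := hd.circleIntegral_sub_inv_smul (w := 0) (by simp)
  have heq : (∮ z in C((0:ℂ), 1), Complex.exp (a1 * x1 + a2 * z) / (x1 * z * (x1 - z) ^ n))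
      = ∮ z in C((0:ℂ), 1), (z - 0)⁻¹ • h z := by
    refine circleIntegral.integral_congr (by norm_num) fun z _ => ?_
    simp only [hh, smul_eq_mul, sub_zero, div_eq_mul_inv, mul_inv]
    ring
  rw [res, heq, key]
  have hx1' : x1 ≠ 0 := by intro h0; rw [h0] at hx1; simp at hx1
  simp only [hh, smul_eq_mul, mul_zero, add_zero, sub_zero]
  rw [← mul_assoc, inv_mul_cancel₀ (by simp [Real.pi_ne_zero, Complex.I_ne_zero])]
  rw [one_mul, pow_succ']

lemma outer_res (n : ℕ) (a1 : ℝ) :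
    res (fun x1 => Complex.exp (a1 * x1) / x1 ^ (n + 1)) 2
      = (a1 : ℂ) ^ n / n.factorial := by
  set f : ℂ → ℂ := fun z => Complex.exp (a1 * z) with hf
  have hdf : Differentiable ℂ f := by fun_prop
  have hps : HasFPowerSeriesOnBall f (cauchyPowerSeries f 0 (2:NNReal)) 0 (2:NNReal) :=
    hdf.differentiableOn.hasFPowerSeriesOnBall (by norm_num)
  have hfac := hps.factorial_smul (y := 1) n
  have hiter : iteratedFDeriv ℂ n f 0 (fun _ => 1) = (a1 : ℂ) ^ n := by
    rw [← iteratedDeriv_eq_iteratedFDeriv]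
    rw [hf, iteratedDeriv_cexp_const_mul]
    simp
  have happ := cauchyPowerSeries_apply f 0 ((2:NNReal):ℝ) n 1
  have hcast : ((2:NNReal):ℝ) = (2:ℝ) := by norm_num
  rw [hcast] at happ
  have hres : res (fun x1 => Complex.exp (a1 * x1) / x1 ^ (n + 1)) 2
      = cauchyPowerSeries f 0 (2:NNReal) n (fun _ => 1) := by
    rw [hcast, happ, res, smul_eq_mul]
    congr 1
    refine circleIntegral.integral_congr (by norm_num) fun z _ => ?_
    simp only [hf, smul_eq_mul, sub_zero, div_eq_mul_inv, mul_inv, one_div, inv_pow, pow_succ]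
    ring
  have hfacne : ((n.factorial : ℂ)) ≠ 0 := by exact_mod_cast n.factorial_ne_zero
  rw [hiter] at hfac
  rw [hcast] at hfac
  rw [hres, hcast, eq_div_iff hfacne, ← hfac, nsmul_eq_mul]
  ring

/-- `Res_{x₁=0} Res_{x₂=0} e^{a₁x₁+a₂x₂}/(x₁ x₂ (x₁-x₂)^n) = a₁^n/n!`
(inner residue in `x₂` on a small circle, outer residue in `x₁` on a larger circle). -/
theorem iterated_residue_A2 (n : ℕ) (hn : 0 < n) (a1 a2 : ℝ) :
    res (fun x1 => res (fun x2 =>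
        Complex.exp (a1 * x1 + a2 * x2) / (x1 * x2 * (x1 - x2) ^ n)) 1) 2
      = (a1 : ℂ) ^ n / n.factorial := by
  rw [res_congr (g := fun x1 => Complex.exp (a1 * x1) / x1 ^ (n + 1)) (by norm_num)
      (fun x1 hx1 => inner_res n a1 a2 x1 (by simpa using hx1))]
  exact outer_res n a1
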